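/- Let J : ℝ² → ℝ³ be an injective linear map, h > 0, and x̂₀ = (x̂₀₁, x̂₀₂) ∈ ℝ² a point not lying on any of the three lines x₂ = 0, x₁ + x₂ = 1, x₁ = 0 containing the edges of the reference triangle T̂. Then ∫_{T̂} dA(x̂) / √(|J(x̂ − x̂₀)|² + h²) = Σ_{j=1}^{3} ŝ_j·∫_{−1}^{1} [(√(|J r_j(t)|² + h²) − h) / |J r_j(t)|²]·|r_j'| dt, where r_j, |r_j'|, and ŝ_j are the edge parametrizations, constant speeds, and signed distances associated with the shifted triangle T̂ − x̂₀. -/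

import Mathlib

open MeasureTheory Real

noncomputable section CNS

namespace CNS

/-- quadratic form -/
def Qf (a b c x y : ℝ) : ℝ := a*x^2 + 2*b*x*y + c*y^2

def Sf (a b c h x y : ℝ) : ℝ := Real.sqrt (Qf a b c x y + h^2)

def Ff (a b c h x y : ℝ) : ℝ := (Sf a b c h x y + h)⁻¹

def Pf (a b c h x y : ℝ) : ℝ := x * Ff a b c h x y
def Vf (a b c h x y : ℝ) : ℝ := y * Ff a b c h x y

def dPf (a b c h x y : ℝ) : ℝ :=
  Ff a b c h x y - x * ((a*x+b*y) / Sf a b c h x y) / (Sf a b c h x y + h)^2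
def dVf (a b c h x y : ℝ) : ℝ :=
  Ff a b c h x y - y * ((b*x+c*y) / Sf a b c h x y) / (Sf a b c h x y + h)^2

variable {a b c h : ℝ}

lemma Sf_ge (hh : 0 < h) (hQ : ∀ x y, 0 ≤ Qf a b c x y) (x y : ℝ) :
    h ≤ Sf a b c h x y := by
  have : h = Real.sqrt (h^2) := by rw [Real.sqrt_sq hh.le]
  rw [this, Sf]
  exact Real.sqrt_le_sqrt (by nlinarith [hQ x y, Real.sq_sqrt hh.le])

lemma Sf_pos (hh : 0 < h) (hQ : ∀ x y, 0 ≤ Qf a b c x y) (x y : ℝ) :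
    0 < Sf a b c h x y := lt_of_lt_of_le hh (Sf_ge hh hQ x y)

lemma Sf_sq (hh : 0 < h) (hQ : ∀ x y, 0 ≤ Qf a b c x y) (x y : ℝ) :
    (Sf a b c h x y)^2 = Qf a b c x y + h^2 :=
  Real.sq_sqrt (by nlinarith [hQ x y])

lemma Sf_add_pos (hh : 0 < h) (hQ : ∀ x y, 0 ≤ Qf a b c x y) (x y : ℝ) :
    0 < Sf a b c h x y + h := by linarith [Sf_pos hh hQ x y]

/-- divergence identity -/
lemma div_eq (hh : 0 < h) (hQ : ∀ x y, 0 ≤ Qf a b c x y) (x y : ℝ) :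
    dPf a b c h x y + dVf a b c h x y = (Sf a b c h x y)⁻¹ := by
  have hs := Sf_pos hh hQ x y
  have hsh := Sf_add_pos hh hQ x y
  have hsq := Sf_sq hh hQ x y
  rw [dPf, dVf, Ff]
  simp only [Qf] at hsq
  field_simp
  linear_combination hsq

lemma hasDerivAt_Qx (a b c : ℝ) (y x : ℝ) :
    HasDerivAt (fun x : ℝ => Qf a b c x y + h^2) (2*a*x + 2*b*y) x := by
  simp only [Qf]
  have h1 : HasDerivAt (fun x : ℝ => a*x^2) (a*(2*x^1)) x := (hasDerivAt_pow 2 x).const_mul a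
  have h2 : HasDerivAt (fun x : ℝ => 2*b*x*y) (2*b*1*y) x :=
    ((hasDerivAt_id x).const_mul (2*b)).mul_const y
  have h3 := ((h1.add h2).add_const (c*y^2)).add_const (h^2)
  exact h3.congr_deriv (by ring)

lemma hasDerivAt_Qy (a b c : ℝ) (x y : ℝ) :
    HasDerivAt (fun y : ℝ => Qf a b c x y + h^2) (2*b*x + 2*c*y) y := by
  simp only [Qf]
  have h2 : HasDerivAt (fun y : ℝ => 2*b*x*y) (2*b*x*1) y :=
    (hasDerivAt_id y).const_mul (2*b*x)
  have h3 : HasDerivAt (fun y : ℝ => c*y^2) (c*(2*y^1)) y := (hasDerivAt_pow 2 y).const_mul c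
  have h4 := (((hasDerivAt_const y (a*x^2)).add h2).add h3).add_const (h^2)
  exact h4.congr_deriv (by ring)

lemma Qh_pos (hh : 0 < h) (hQ : ∀ x y, 0 ≤ Qf a b c x y) (x y : ℝ) :
    0 < Qf a b c x y + h^2 := by nlinarith [hQ x y]

lemma hasDerivAt_Sx (hh : 0 < h) (hQ : ∀ x y, 0 ≤ Qf a b c x y) (y x : ℝ) :
    HasDerivAt (fun x => Sf a b c h x y) ((2*a*x + 2*b*y) / (2 * Sf a b c h x y)) x := by
  simpa only [Sf] using (hasDerivAt_Qx a b c y x).sqrt (ne_of_gt (Qh_pos hh hQ x y))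

lemma hasDerivAt_Sy (hh : 0 < h) (hQ : ∀ x y, 0 ≤ Qf a b c x y) (x y : ℝ) :
    HasDerivAt (fun y => Sf a b c h x y) ((2*b*x + 2*c*y) / (2 * Sf a b c h x y)) y := by
  simpa only [Sf] using (hasDerivAt_Qy a b c x y).sqrt (ne_of_gt (Qh_pos hh hQ x y))

lemma hasDerivAt_P (hh : 0 < h) (hQ : ∀ x y, 0 ≤ Qf a b c x y) (y x : ℝ) :
    HasDerivAt (fun x => Pf a b c h x y) (dPf a b c h x y) x := by
  have hs := Sf_pos hh hQ x y
  have hsh := Sf_add_pos hh hQ x y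
  have hF : HasDerivAt (fun x => Ff a b c h x y)
      (-((2*a*x + 2*b*y) / (2 * Sf a b c h x y)) / (Sf a b c h x y + h)^2) x := by
    simpa only [Ff, Pi.inv_def] using
      (((hasDerivAt_Sx hh hQ y x).add_const h).inv (ne_of_gt hsh))
  have hP := (hasDerivAt_id x).mul hF
  simp only [Pf, dPf]
  refine hP.congr_deriv ?_
  simp only [id_eq]
  have h2 : Sf a b c h x y ≠ 0 := ne_of_gt hs
  have h3 : Sf a b c h x y + h ≠ 0 := ne_of_gt hsh
  field_simp
  ring

lemma hasDerivAt_V (hh : 0 < h) (hQ : ∀ x y, 0 ≤ Qf a b c x y) (x y : ℝ) :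
    HasDerivAt (fun y => Vf a b c h x y) (dVf a b c h x y) y := by
  have hs := Sf_pos hh hQ x y
  have hsh := Sf_add_pos hh hQ x y
  have hF : HasDerivAt (fun y => Ff a b c h x y)
      (-((2*b*x + 2*c*y) / (2 * Sf a b c h x y)) / (Sf a b c h x y + h)^2) y := by
    simpa only [Ff, Pi.inv_def] using
      (((hasDerivAt_Sy hh hQ x y).add_const h).inv (ne_of_gt hsh))
  have hV := (hasDerivAt_id y).mul hF
  simp only [Vf, dVf]
  refine hV.congr_deriv ?_
  simp only [id_eq]
  have h2 : Sf a b c h x y ≠ 0 := ne_of_gt hs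
  have h3 : Sf a b c h x y + h ≠ 0 := ne_of_gt hsh
  field_simp
  ring

section Continuity

variable {α : Type*} [TopologicalSpace α] {u v : α → ℝ}

lemma contS (hu : Continuous u) (hv : Continuous v) :
    Continuous fun t => Sf a b c h (u t) (v t) := by
  apply Real.continuous_sqrt.comp
  simp only [Qf]
  fun_prop

lemma contF (hh : 0 < h) (hQ : ∀ x y, 0 ≤ Qf a b c x y)
    (hu : Continuous u) (hv : Continuous v) :
    Continuous fun t => Ff a b c h (u t) (v t) := by
  simp only [Ff]
  exact ((contS hu hv).add continuous_const).inv₀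
    (fun t => ne_of_gt (Sf_add_pos hh hQ _ _))

lemma contdP (hh : 0 < h) (hQ : ∀ x y, 0 ≤ Qf a b c x y)
    (hu : Continuous u) (hv : Continuous v) :
    Continuous fun t => dPf a b c h (u t) (v t) := by
  simp only [dPf]
  apply (contF hh hQ hu hv).sub
  apply Continuous.div
  · exact hu.mul (Continuous.div (by fun_prop) (contS hu hv)
      (fun t => ne_of_gt (Sf_pos hh hQ _ _)))
  · exact ((contS hu hv).add continuous_const).pow 2
  · exact fun t => pow_ne_zero 2 (ne_of_gt (Sf_add_pos hh hQ _ _))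

lemma contdV (hh : 0 < h) (hQ : ∀ x y, 0 ≤ Qf a b c x y)
    (hu : Continuous u) (hv : Continuous v) :
    Continuous fun t => dVf a b c h (u t) (v t) := by
  simp only [dVf]
  apply (contF hh hQ hu hv).sub
  apply Continuous.div
  · exact hv.mul (Continuous.div (by fun_prop) (contS hu hv)
      (fun t => ne_of_gt (Sf_pos hh hQ _ _)))
  · exact ((contS hu hv).add continuous_const).pow 2
  · exact fun t => pow_ne_zero 2 (ne_of_gt (Sf_add_pos hh hQ _ _))

lemma contSinv (hh : 0 < h) (hQ : ∀ x y, 0 ≤ Qf a b c x y)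
    (hu : Continuous u) (hv : Continuous v) :
    Continuous fun t => (Sf a b c h (u t) (v t))⁻¹ :=
  (contS hu hv).inv₀ (fun t => ne_of_gt (Sf_pos hh hQ _ _))

lemma contP (hh : 0 < h) (hQ : ∀ x y, 0 ≤ Qf a b c x y)
    (hu : Continuous u) (hv : Continuous v) :
    Continuous fun t => Pf a b c h (u t) (v t) := by
  simp only [Pf]; exact hu.mul (contF hh hQ hu hv)

lemma contV (hh : 0 < h) (hQ : ∀ x y, 0 ≤ Qf a b c x y)
    (hu : Continuous u) (hv : Continuous v) :
    Continuous fun t => Vf a b c h (u t) (v t) := by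
  simp only [Vf]; exact hv.mul (contF hh hQ hu hv)

end Continuity

/-! ### Triangle slicing -/

def Tri : Set (ℝ × ℝ) := {z | 0 ≤ z.1 ∧ 0 ≤ z.2 ∧ z.1 + z.2 ≤ 1}

lemma isClosed_Tri : IsClosed Tri := by
  have h1 : IsClosed {z : ℝ × ℝ | 0 ≤ z.1} := isClosed_le continuous_const continuous_fst
  have h2 : IsClosed {z : ℝ × ℝ | 0 ≤ z.2} := isClosed_le continuous_const continuous_snd
  have h3 : IsClosed {z : ℝ × ℝ | z.1 + z.2 ≤ 1} :=
    isClosed_le (continuous_fst.add continuous_snd) continuous_const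
  exact h1.inter (h2.inter h3)

lemma measurableSet_Tri : MeasurableSet Tri := isClosed_Tri.measurableSet

lemma isCompact_Tri : IsCompact Tri := by
  apply (isCompact_Icc (a := ((0:ℝ),(0:ℝ))) (b := ((1:ℝ),(1:ℝ)))).of_isClosed_subset isClosed_Tri
  rintro ⟨x, y⟩ ⟨h1, h2, h3⟩
  simp only [Set.mem_Icc, Prod.mk_le_mk]
  exact ⟨⟨h1, h2⟩, by constructor <;> linarith⟩

lemma sliceX (F : ℝ × ℝ → ℝ) (hF : Continuous F) :
    ∫ z in Tri, F z = ∫ y in Set.Icc (0:ℝ) 1, ∫ x in Set.Icc (0:ℝ) (1 - y), F (x, y) := by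
  have hInt : IntegrableOn F Tri := hF.continuousOn.integrableOn_compact isCompact_Tri
  have hind : Integrable (Tri.indicator F) :=
    (integrable_indicator_iff measurableSet_Tri).2 hInt
  rw [← integral_indicator measurableSet_Tri]
  rw [show (volume : Measure (ℝ × ℝ)) = (volume : Measure ℝ).prod volume from
    (Measure.volume_eq_prod ℝ ℝ)] at hind ⊢
  rw [integral_prod_symm _ hind]
  have key : ∀ y : ℝ, (∫ x, Tri.indicator F (x, y)) =
      (Set.Icc (0:ℝ) 1).indicator (fun y => ∫ x in Set.Icc (0:ℝ) (1 - y), F (x, y)) y := by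
    intro y
    by_cases hy : y ∈ Set.Icc (0:ℝ) 1
    · rw [Set.indicator_of_mem hy]
      have hfun : (fun x => Tri.indicator F (x, y)) =
          (Set.Icc (0:ℝ) (1 - y)).indicator (fun x => F (x, y)) := by
        funext x
        by_cases hx : x ∈ Set.Icc (0:ℝ) (1 - y)
        · rw [Set.indicator_of_mem hx, Set.indicator_of_mem]
          simp only [Tri, Set.mem_setOf_eq]
          simp only [Set.mem_Icc] at hx hy
          exact ⟨hx.1, hy.1, by linarith [hx.2]⟩
        · rw [Set.indicator_of_notMem hx, Set.indicator_of_notMem]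
          simp only [Tri, Set.mem_setOf_eq]
          simp only [Set.mem_Icc, not_and_or, not_le] at hx ⊢
          rcases hx with hx | hx
          · left; linarith
          · right; right; linarith
      rw [hfun, integral_indicator measurableSet_Icc]
    · rw [Set.indicator_of_notMem hy]
      have : ∀ x, Tri.indicator F (x, y) = 0 := by
        intro x
        apply Set.indicator_of_notMem
        simp only [Tri, Set.mem_setOf_eq]
        rintro ⟨a1, a2, a3⟩
        simp only [Set.mem_Icc, not_and_or, not_le] at hy
        rcases hy with hy | hy <;> linarith
      simp [this]
  simp_rw [key]
  rw [integral_indicator measurableSet_Icc]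

lemma sliceY (F : ℝ × ℝ → ℝ) (hF : Continuous F) :
    ∫ z in Tri, F z = ∫ x in Set.Icc (0:ℝ) 1, ∫ y in Set.Icc (0:ℝ) (1 - x), F (x, y) := by
  have hswap : ∫ z in Tri, F z = ∫ z in Tri, (F ∘ Prod.swap) z := by
    have hmp : MeasurePreserving (Prod.swap : ℝ × ℝ → ℝ × ℝ) volume volume := by
      rw [show (volume : Measure (ℝ × ℝ)) = (volume : Measure ℝ).prod volume from
        (Measure.volume_eq_prod ℝ ℝ)]
      exact Measure.measurePreserving_swap
    have hpre : (Prod.swap : ℝ × ℝ → ℝ × ℝ) ⁻¹' Tri = Tri := by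
      ext ⟨x, y⟩
      simp only [Tri, Set.mem_preimage, Set.mem_setOf_eq, Prod.swap]
      constructor <;> rintro ⟨h1, h2, h3⟩ <;> exact ⟨h2, h1, by linarith⟩
    have hemb : MeasurableEmbedding (Prod.swap : ℝ × ℝ → ℝ × ℝ) :=
      MeasurableEquiv.prodComm.measurableEmbedding
    have := hmp.setIntegral_preimage_emb hemb F Tri
    rw [hpre] at this
    exact this.symm
  rw [hswap, sliceX _ (hF.comp continuous_swap)]
  rfl

/-! ### Core identity -/

theorem core (a b c p q h : ℝ) (hh : 0 < h) (hQ : ∀ x y, 0 ≤ Qf a b c x y) :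
    ∫ z in Tri, 1 / Real.sqrt (Qf a b c (z.1 - p) (z.2 - q) + h ^ 2)
      = q * (∫ t in (-1:ℝ)..1, Ff a b c h (-p + (t + 1) / 2) (-q) * (1 / 2))
      + (Real.sqrt 2 / 2 * (1 - p - q)) *
          (∫ t in (-1:ℝ)..1,
            Ff a b c h (1 - p - (t + 1) / 2) (-q + (t + 1) / 2) * (Real.sqrt 2 / 2))
      + p * (∫ t in (-1:ℝ)..1, Ff a b c h (-p) (1 - q - (t + 1) / 2) * (1 / 2)) := by
  have hcP : Continuous fun z : ℝ × ℝ => dPf a b c h (z.1 - p) (z.2 - q) :=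
    contdP hh hQ (by fun_prop) (by fun_prop)
  have hcV : Continuous fun z : ℝ × ℝ => dVf a b c h (z.1 - p) (z.2 - q) :=
    contdV hh hQ (by fun_prop) (by fun_prop)
  -- abbreviations
  set I₁ : ℝ := ∫ x in (0:ℝ)..1, Ff a b c h (x - p) (-q) with hI₁
  set I₂ : ℝ := ∫ y in (0:ℝ)..1, Ff a b c h (1 - y - p) (y - q) with hI₂
  set I₃ : ℝ := ∫ y in (0:ℝ)..1, Ff a b c h (-p) (y - q) with hI₃
  -- step 1 : divergence rewrite and splitting
  have hstep1 : ∫ z in Tri, 1 / Real.sqrt (Qf a b c (z.1 - p) (z.2 - q) + h ^ 2)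
      = (∫ z in Tri, dPf a b c h (z.1 - p) (z.2 - q))
        + ∫ z in Tri, dVf a b c h (z.1 - p) (z.2 - q) := by
    rw [← integral_add (hcP.continuousOn.integrableOn_compact isCompact_Tri)
      (hcV.continuousOn.integrableOn_compact isCompact_Tri)]
    apply setIntegral_congr_fun measurableSet_Tri
    intro z _
    show 1 / Real.sqrt (Qf a b c (z.1 - p) (z.2 - q) + h ^ 2)
        = dPf a b c h (z.1 - p) (z.2 - q) + dVf a b c h (z.1 - p) (z.2 - q)
    rw [div_eq hh hQ, one_div, Sf]
  -- step 2 : FTC in x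
  have e1 : (∫ z in Tri, dPf a b c h (z.1 - p) (z.2 - q))
      = (∫ y in (0:ℝ)..1, Pf a b c h (1 - y - p) (y - q))
        - ∫ y in (0:ℝ)..1, Pf a b c h (-p) (y - q) := by
    rw [sliceX _ hcP]
    have hinner : Set.EqOn
        (fun y => ∫ x in Set.Icc (0:ℝ) (1 - y),
          (fun z : ℝ × ℝ => dPf a b c h (z.1 - p) (z.2 - q)) (x, y))
        (fun y => Pf a b c h (1 - y - p) (y - q) - Pf a b c h (-p) (y - q))
        (Set.Icc (0:ℝ) 1) := by
      intro y hy
      simp only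
      rw [integral_Icc_eq_integral_Ioc,
        ← intervalIntegral.integral_of_le (by linarith [hy.2] : (0:ℝ) ≤ 1 - y)]
      have hder : ∀ x ∈ Set.uIcc (0:ℝ) (1 - y),
          HasDerivAt (fun x => Pf a b c h (x - p) (y - q)) (dPf a b c h (x - p) (y - q)) x := by
        intro x _
        have := (hasDerivAt_P hh hQ (y - q) (x - p)).comp x ((hasDerivAt_id x).sub_const p)
        simpa [Function.comp_def] using this
      rw [intervalIntegral.integral_eq_sub_of_hasDerivAt hder
        ((contdP hh hQ (by fun_prop) (by fun_prop)).intervalIntegrable _ _)]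
      norm_num
    rw [setIntegral_congr_fun measurableSet_Icc hinner,
      integral_Icc_eq_integral_Ioc, ← intervalIntegral.integral_of_le zero_le_one,
      intervalIntegral.integral_sub
        ((contP hh hQ (by fun_prop) (by fun_prop)).intervalIntegrable _ _)
        ((contP hh hQ (by fun_prop) (by fun_prop)).intervalIntegrable _ _)]
  -- step 3 : FTC in y
  have e2 : (∫ z in Tri, dVf a b c h (z.1 - p) (z.2 - q))
      = (∫ x in (0:ℝ)..1, Vf a b c h (x - p) (1 - x - q))
        - ∫ x in (0:ℝ)..1, Vf a b c h (x - p) (-q) := by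
    rw [sliceY _ hcV]
    have hinner : Set.EqOn
        (fun x => ∫ y in Set.Icc (0:ℝ) (1 - x),
          (fun z : ℝ × ℝ => dVf a b c h (z.1 - p) (z.2 - q)) (x, y))
        (fun x => Vf a b c h (x - p) (1 - x - q) - Vf a b c h (x - p) (-q))
        (Set.Icc (0:ℝ) 1) := by
      intro x hx
      simp only
      rw [integral_Icc_eq_integral_Ioc,
        ← intervalIntegral.integral_of_le (by linarith [hx.2] : (0:ℝ) ≤ 1 - x)]
      have hder : ∀ y ∈ Set.uIcc (0:ℝ) (1 - x),
          HasDerivAt (fun y => Vf a b c h (x - p) (y - q)) (dVf a b c h (x - p) (y - q)) y := by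
        intro y _
        have := (hasDerivAt_V hh hQ (x - p) (y - q)).comp y ((hasDerivAt_id y).sub_const q)
        simpa [Function.comp_def] using this
      rw [intervalIntegral.integral_eq_sub_of_hasDerivAt hder
        ((contdV hh hQ (by fun_prop) (by fun_prop)).intervalIntegrable _ _)]
      norm_num
    rw [setIntegral_congr_fun measurableSet_Icc hinner,
      integral_Icc_eq_integral_Ioc, ← intervalIntegral.integral_of_le zero_le_one,
      intervalIntegral.integral_sub
        ((contV hh hQ (by fun_prop) (by fun_prop)).intervalIntegrable _ _)
        ((contV hh hQ (by fun_prop) (by fun_prop)).intervalIntegrable _ _)]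
  -- edge reductions
  have r1 : (∫ y in (0:ℝ)..1, Pf a b c h (-p) (y - q)) = -p * I₃ := by
    rw [hI₃, ← intervalIntegral.integral_const_mul]
    apply intervalIntegral.integral_congr
    intro y _
    simp only [Pf]
  have r2 : (∫ x in (0:ℝ)..1, Vf a b c h (x - p) (-q)) = -q * I₁ := by
    rw [hI₁, ← intervalIntegral.integral_const_mul]
    apply intervalIntegral.integral_congr
    intro x _
    simp only [Vf]
  have r3 : (∫ y in (0:ℝ)..1, Pf a b c h (1 - y - p) (y - q))
      + (∫ x in (0:ℝ)..1, Vf a b c h (x - p) (1 - x - q)) = (1 - p - q) * I₂ := by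
    have hrev : (∫ x in (0:ℝ)..1, Vf a b c h (x - p) (1 - x - q))
        = ∫ y in (0:ℝ)..1, Vf a b c h (1 - y - p) (y - q) := by
      have hcs := intervalIntegral.integral_comp_sub_left
        (a := (0:ℝ)) (b := 1) (fun y => Vf a b c h (1 - y - p) (y - q)) 1
      norm_num at hcs
      rw [← hcs]
    rw [hrev, ← intervalIntegral.integral_add
      ((contP hh hQ (by fun_prop) (by fun_prop)).intervalIntegrable _ _)
      ((contV hh hQ (by fun_prop) (by fun_prop)).intervalIntegrable _ _),
      hI₂, ← intervalIntegral.integral_const_mul]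
    apply intervalIntegral.integral_congr
    intro y _
    simp only [Pf, Vf]
    ring
  -- substitutions to [-1,1]
  have s1 : (∫ t in (-1:ℝ)..1, Ff a b c h (-p + (t + 1) / 2) (-q) * (1 / 2)) = I₁ := by
    rw [intervalIntegral.integral_mul_const]
    have harg : ∀ t : ℝ, Ff a b c h (-p + (t + 1) / 2) (-q)
        = (fun u => Ff a b c h (u - p) (-q)) (2⁻¹ * t + 2⁻¹) := by
      intro t; simp only; congr 1; ring
    simp only [harg]
    rw [intervalIntegral.integral_comp_mul_add (fun u => Ff a b c h (u - p) (-q))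
      (by norm_num : (2:ℝ)⁻¹ ≠ 0) 2⁻¹]
    norm_num [hI₁]
    try ring
  have s3 : (∫ t in (-1:ℝ)..1, Ff a b c h (-p) (1 - q - (t + 1) / 2) * (1 / 2)) = I₃ := by
    rw [intervalIntegral.integral_mul_const]
    have harg : ∀ t : ℝ, Ff a b c h (-p) (1 - q - (t + 1) / 2)
        = (fun u => Ff a b c h (-p) (u - q)) (-2⁻¹ * t + 2⁻¹) := by
      intro t; simp only; congr 1; ring
    simp only [harg]
    rw [intervalIntegral.integral_comp_mul_add (fun u => Ff a b c h (-p) (u - q))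
      (by norm_num : (-2⁻¹:ℝ) ≠ 0) 2⁻¹]
    norm_num
    rw [hI₃, show (∫ y in (0:ℝ)..1, Ff a b c h (-p) (y - q))
        = ∫ x in (0:ℝ)-q..1-q, Ff a b c h (-p) x from
        intervalIntegral.integral_comp_sub_right _ q,
      intervalIntegral.integral_symm]
    norm_num
    try ring
  have s2 : (∫ t in (-1:ℝ)..1,
        Ff a b c h (1 - p - (t + 1) / 2) (-q + (t + 1) / 2) * (Real.sqrt 2 / 2))
      = Real.sqrt 2 * I₂ := by
    rw [intervalIntegral.integral_mul_const]
    have harg : ∀ t : ℝ, Ff a b c h (1 - p - (t + 1) / 2) (-q + (t + 1) / 2)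
        = (fun u => Ff a b c h (1 - u - p) (u - q)) (2⁻¹ * t + 2⁻¹) := by
      intro t; simp only; congr 1 <;> ring
    simp only [harg]
    rw [intervalIntegral.integral_comp_mul_add (fun u => Ff a b c h (1 - u - p) (u - q))
      (by norm_num : (2:ℝ)⁻¹ ≠ 0) 2⁻¹]
    norm_num [hI₂]
    try ring
  rw [hstep1, e1, e2, r1, r2, s1, s2, s3]
  have hn := r3
  have h2 : Real.sqrt 2 * Real.sqrt 2 = 2 := Real.mul_self_sqrt (by norm_num)
  linear_combination hn - ((1 - p - q) * I₂ / 2) * h2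

/-! ### Ff versus the stated integrand -/

lemma Ff_eq (hh : 0 < h) (x y : ℝ) (hQp : 0 < Qf a b c x y) :
    (Real.sqrt (Qf a b c x y + h ^ 2) - h) / Qf a b c x y = Ff a b c h x y := by
  have hs2 : (Real.sqrt (Qf a b c x y + h ^ 2)) ^ 2 = Qf a b c x y + h ^ 2 :=
    Real.sq_sqrt (by nlinarith)
  have hsnn : 0 ≤ Real.sqrt (Qf a b c x y + h ^ 2) := Real.sqrt_nonneg _
  have hgt : h < Real.sqrt (Qf a b c x y + h ^ 2) := by nlinarith
  rw [Ff, Sf]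
  rw [div_eq_iff (ne_of_gt hQp), eq_comm, inv_mul_eq_div, div_eq_iff (by positivity)]
  linear_combination -hs2

/-! ### Transport from `EuclideanSpace ℝ (Fin 2)` -/

def mk2 (x y : ℝ) : EuclideanSpace ℝ (Fin 2) := WithLp.toLp 2 ![x, y]

lemma mk2_decomp (x y : ℝ) : mk2 x y = x • mk2 1 0 + y • mk2 0 1 := by
  ext i
  fin_cases i <;> simp [mk2]

lemma norm_sq_expand (J : EuclideanSpace ℝ (Fin 2) →ₗ[ℝ] EuclideanSpace ℝ (Fin 3))
    (x y : ℝ) :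
    ‖J (mk2 x y)‖ ^ 2
      = ‖J (mk2 1 0)‖ ^ 2 * x ^ 2
        + 2 * (inner ℝ (J (mk2 1 0)) (J (mk2 0 1)) : ℝ) * x * y
        + ‖J (mk2 0 1)‖ ^ 2 * y ^ 2 := by
  rw [mk2_decomp x y, map_add, LinearMap.map_smul, LinearMap.map_smul]
  simp only [← real_inner_self_eq_norm_sq, real_inner_add_add_self, real_inner_smul_left,
    real_inner_smul_right]
  ring

def EQr2 : (ℝ × ℝ) ≃ᵐ EuclideanSpace ℝ (Fin 2) :=
  (MeasurableEquiv.finTwoArrow).symm.trans (MeasurableEquiv.toLp 2 (Fin 2 → ℝ))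

lemma EQr2_mp : MeasurePreserving EQr2 volume volume := by
  have h1 := (EuclideanSpace.volume_preserving_symm_measurableEquiv_toLp (Fin 2)).symm
    (MeasurableEquiv.toLp 2 (Fin 2 → ℝ)).symm
  have h2 := (volume_preserving_finTwoArrow ℝ).symm (MeasurableEquiv.finTwoArrow)
  have h3 := h1.comp h2
  simpa [EQr2, MeasurableEquiv.coe_trans] using h3

lemma EQr2_apply (z : ℝ × ℝ) : EQr2 z = mk2 z.1 z.2 := by
  ext i
  fin_cases i <;> rfl

end CNS
end CNS

open CNS in
/-- (Continuation approach for the near-singular first-order term.)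
Let `J : ℝ² → ℝ³` be an injective linear map, `h > 0`, and `x̂₀ ∈ ℝ²` a point not on
any of the three lines `x₂ = 0`, `x₁ + x₂ = 1`, `x₁ = 0` containing the edges of the
reference triangle `T̂`. Then
`∫_{T̂} dA(x̂)/√(|J(x̂−x̂₀)|²+h²) = Σ_j ŝ_j·∫_{−1}^1 [(√(|J r_j(t)|²+h²)−h)/|J r_j(t)|²]·|r_j'| dt`,
with the edge parametrizations `r_j`, constant speeds `|r_j'|`, and signed distances
`ŝ_j` of the shifted triangle `T̂ − x̂₀`. -/
theorem continuation_near_singular_reference_triangle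
    (J : EuclideanSpace ℝ (Fin 2) →ₗ[ℝ] EuclideanSpace ℝ (Fin 3))
    (hJ : Function.Injective J)
    (h : ℝ) (hh : 0 < h)
    (x₀ : EuclideanSpace ℝ (Fin 2))
    (hL1 : x₀ 1 ≠ 0) (hL2 : x₀ 0 + x₀ 1 ≠ 1) (hL3 : x₀ 0 ≠ 0)
    (T : Set (EuclideanSpace ℝ (Fin 2)))
    (hT : T = {x : EuclideanSpace ℝ (Fin 2) | 0 ≤ x 0 ∧ 0 ≤ x 1 ∧ x 0 + x 1 ≤ 1})
    (r₁ r₂ r₃ : ℝ → EuclideanSpace ℝ (Fin 2))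
    (hr₁ : ∀ t : ℝ, r₁ t = ![-(x₀ 0) + (t + 1) / 2, -(x₀ 1)])
    (hr₂ : ∀ t : ℝ, r₂ t = ![1 - x₀ 0 - (t + 1) / 2, -(x₀ 1) + (t + 1) / 2])
    (hr₃ : ∀ t : ℝ, r₃ t = ![-(x₀ 0), 1 - x₀ 1 - (t + 1) / 2])
    (s₁ s₂ s₃ : ℝ)
    (hs₁ : s₁ = x₀ 1) (hs₂ : s₂ = Real.sqrt 2 / 2 * (1 - x₀ 0 - x₀ 1)) (hs₃ : s₃ = x₀ 0) :
    ∫ x in T, 1 / Real.sqrt (‖J (x - x₀)‖ ^ 2 + h ^ 2) =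
      s₁ * (∫ t in (-1 : ℝ)..1,
          (Real.sqrt (‖J (r₁ t)‖ ^ 2 + h ^ 2) - h) / ‖J (r₁ t)‖ ^ 2 * (1 / 2))
      + s₂ * (∫ t in (-1 : ℝ)..1,
          (Real.sqrt (‖J (r₂ t)‖ ^ 2 + h ^ 2) - h) / ‖J (r₂ t)‖ ^ 2 * (Real.sqrt 2 / 2))
      + s₃ * (∫ t in (-1 : ℝ)..1,
          (Real.sqrt (‖J (r₃ t)‖ ^ 2 + h ^ 2) - h) / ‖J (r₃ t)‖ ^ 2 * (1 / 2)) := by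
  set a : ℝ := ‖J (mk2 1 0)‖ ^ 2 with ha
  set b : ℝ := (inner ℝ (J (mk2 1 0)) (J (mk2 0 1)) : ℝ) with hb
  set c : ℝ := ‖J (mk2 0 1)‖ ^ 2 with hc
  have hN : ∀ x y : ℝ, ‖J (mk2 x y)‖ ^ 2 = Qf a b c x y := by
    intro x y
    rw [norm_sq_expand J x y, Qf]
  have hQ0 : ∀ x y : ℝ, 0 ≤ Qf a b c x y := by
    intro x y
    rw [← hN]
    positivity
  have hQpos : ∀ x y : ℝ, ¬(x = 0 ∧ y = 0) → 0 < Qf a b c x y := by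
    intro x y hxy
    rw [← hN]
    have hv : mk2 x y ≠ 0 := by
      intro hz
      apply hxy
      constructor
      · have := congrArg (fun v : EuclideanSpace ℝ (Fin 2) => v 0) hz
        simpa [mk2] using this
      · have := congrArg (fun v : EuclideanSpace ℝ (Fin 2) => v 1) hz
        simpa [mk2] using this
    have hJv : J (mk2 x y) ≠ 0 := fun hz => hv (hJ (by rw [hz, map_zero]))
    exact pow_pos (norm_pos_iff.mpr hJv) 2
  -- transport of the left-hand side
  have hTpre : EQr2 ⁻¹' T = Tri := by
    ext z
    rw [Set.mem_preimage, hT, EQr2_apply]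
    exact Iff.rfl
  have hsub : ∀ z : ℝ × ℝ, EQr2 z - x₀ = mk2 (z.1 - x₀ 0) (z.2 - x₀ 1) := by
    intro z
    rw [EQr2_apply]
    ext i
    fin_cases i <;> rfl
  have hLHS : (∫ x in T, 1 / Real.sqrt (‖J (x - x₀)‖ ^ 2 + h ^ 2))
      = ∫ z in Tri, 1 / Real.sqrt (Qf a b c (z.1 - x₀ 0) (z.2 - x₀ 1) + h ^ 2) := by
    rw [← EQr2_mp.setIntegral_preimage_emb EQr2.measurableEmbedding
      (fun x => 1 / Real.sqrt (‖J (x - x₀)‖ ^ 2 + h ^ 2)) T, hTpre]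
    apply setIntegral_congr_fun measurableSet_Tri
    intro z _
    show 1 / Real.sqrt (‖J (EQr2 z - x₀)‖ ^ 2 + h ^ 2) = _
    rw [hsub z, hN]
  -- rewriting the three boundary integrands
  have hE1 : (∫ t in (-1 : ℝ)..1,
        (Real.sqrt (‖J (r₁ t)‖ ^ 2 + h ^ 2) - h) / ‖J (r₁ t)‖ ^ 2 * (1 / 2))
      = ∫ t in (-1 : ℝ)..1, Ff a b c h (-(x₀ 0) + (t + 1) / 2) (-(x₀ 1)) * (1 / 2) := by
    apply intervalIntegral.integral_congr
    intro t _
    beta_reduce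
    have hr : r₁ t = mk2 (-(x₀ 0) + (t + 1) / 2) (-(x₀ 1)) := congrArg (WithLp.toLp 2) (hr₁ t)
    rw [hr, hN, Ff_eq hh _ _ (hQpos _ _ (by
      rintro ⟨-, h2⟩
      exact hL1 (neg_eq_zero.mp h2)))]
  have hE2 : (∫ t in (-1 : ℝ)..1,
        (Real.sqrt (‖J (r₂ t)‖ ^ 2 + h ^ 2) - h) / ‖J (r₂ t)‖ ^ 2 * (Real.sqrt 2 / 2))
      = ∫ t in (-1 : ℝ)..1,
          Ff a b c h (1 - x₀ 0 - (t + 1) / 2) (-(x₀ 1) + (t + 1) / 2) * (Real.sqrt 2 / 2) := by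
    apply intervalIntegral.integral_congr
    intro t _
    beta_reduce
    have hr : r₂ t = mk2 (1 - x₀ 0 - (t + 1) / 2) (-(x₀ 1) + (t + 1) / 2) := congrArg (WithLp.toLp 2) (hr₂ t)
    rw [hr, hN, Ff_eq hh _ _ (hQpos _ _ (by
      rintro ⟨h1, h2⟩
      exact hL2 (by linarith [h1, h2])))]
  have hE3 : (∫ t in (-1 : ℝ)..1,
        (Real.sqrt (‖J (r₃ t)‖ ^ 2 + h ^ 2) - h) / ‖J (r₃ t)‖ ^ 2 * (1 / 2))
      = ∫ t in (-1 : ℝ)..1, Ff a b c h (-(x₀ 0)) (1 - x₀ 1 - (t + 1) / 2) * (1 / 2) := by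
    apply intervalIntegral.integral_congr
    intro t _
    beta_reduce
    have hr : r₃ t = mk2 (-(x₀ 0)) (1 - x₀ 1 - (t + 1) / 2) := congrArg (WithLp.toLp 2) (hr₃ t)
    rw [hr, hN, Ff_eq hh _ _ (hQpos _ _ (by
      rintro ⟨h1, -⟩
      exact hL3 (neg_eq_zero.mp h1)))]
  rw [hLHS, hs₁, hs₂, hs₃, hE1, hE2, hE3]
  exact core a b c (x₀ 0) (x₀ 1) h hh hQ0
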